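/- arXiv:1210.4959 — 3 statements merged into one kernel-verified Lean document; each statement's English description precedes it below -/
import Mathlib

section
/- For every point P of S there exists a point Q of S with Q ≠ P such that the line through P and Q is a halving line of S. Equivalently, the underlying graph of S has no isolated vertices. -/
/-- Planar cross product (signed area determinant) of two vectors in `ℝ × ℝ`. -/
def det2 (u v : ℝ × ℝ) : ℝ := u.1 * v.2 - u.2 * v.1

/-- Dot product of two vectors in `ℝ × ℝ`. -/
def dot2 (u v : ℝ × ℝ) : ℝ := u.1 * v.1 + u.2 * v.2

/-- A finite set of points of the plane is in general position if no three
distinct points of it are collinear. -/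
def GenPos (S : Finset (ℝ × ℝ)) : Prop :=
  ∀ P ∈ S, ∀ Q ∈ S, ∀ R ∈ S, P ≠ Q → P ≠ R → Q ≠ R →
    ¬ Collinear ℝ ({P, Q, R} : Set (ℝ × ℝ))

/-- The line through the two distinct points `P, Q ∈ S` is a halving line of `S`:
each of the two open half-planes it determines contains exactly
`(S.card - 2) / 2` points of `S`. -/
def IsHalving (S : Finset (ℝ × ℝ)) (P Q : ℝ × ℝ) : Prop :=
  P ∈ S ∧ Q ∈ S ∧ P ≠ Q ∧
  {X ∈ (S : Set (ℝ × ℝ)) | 0 < det2 (Q - P) (X - P)}.ncard = (S.card - 2) / 2 ∧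
  {X ∈ (S : Set (ℝ × ℝ)) | det2 (Q - P) (X - P) < 0}.ncard = (S.card - 2) / 2

/-- Degree of a point in the underlying graph of `S`: the number of points `Q`
such that the line `PQ` is a halving line of `S`. -/
noncomputable def hdeg (S : Finset (ℝ × ℝ)) (P : ℝ × ℝ) : ℕ :=
  {Q : ℝ × ℝ | IsHalving S P Q}.ncard

/-- The number of halving lines of `S`, counted as unordered pairs of points. -/
noncomputable def numHalvingLines (S : Finset (ℝ × ℝ)) : ℕ :=
  {e : Finset (ℝ × ℝ) | ∃ P Q : ℝ × ℝ, e = {P, Q} ∧ IsHalving S P Q}.ncard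

/-- The underlying graph of `S`: vertices are the points of `S`, and two points
are adjacent exactly when the line through them is a halving line of `S`. -/
def underlyingGraph (S : Finset (ℝ × ℝ)) : SimpleGraph {x : ℝ × ℝ // x ∈ S} where
  Adj P Q := IsHalving S P.1 Q.1 ∧ IsHalving S Q.1 P.1
  symm := ⟨fun _ _ h => ⟨h.2, h.1⟩⟩
  loopless := ⟨fun _ h => h.1.2.2.1 rfl⟩

lemma det2_smul' (c : ℝ) (u v : ℝ × ℝ) : det2 (c • u) v = c * det2 u v := by
  simp [det2]; ring

lemma det2_add_smul (a b v : ℝ × ℝ) (r : ℝ) :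
    det2 (a + r • b) v = det2 a v + r * det2 b v := by
  simp [det2]; ring

lemma det2_cauchy (a b v w : ℝ × ℝ) :
    det2 a v * det2 b w - det2 a w * det2 b v = det2 a b * det2 v w := by
  simp [det2]; ring

lemma exists_smul_of_det2 (u v : ℝ × ℝ) (hu : u ≠ 0) (h : det2 u v = 0) :
    ∃ c : ℝ, v = c • u := by
  rcases eq_or_ne u.1 0 with h1 | h1
  · have h2 : u.2 ≠ 0 := fun h2 => hu (Prod.ext h1 h2)
    refine ⟨v.2 / u.2, ?_⟩
    have h3 : u.1 * v.2 - u.2 * v.1 = 0 := h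
    apply Prod.ext
    · simp only [Prod.smul_fst, Prod.smul_snd, smul_eq_mul]; rw [div_mul_eq_mul_div, eq_div_iff h2]
      nlinarith [h3]
    · simp only [Prod.smul_fst, Prod.smul_snd, smul_eq_mul]; rw [div_mul_eq_mul_div, eq_div_iff h2]
  · refine ⟨v.1 / u.1, ?_⟩
    have h3 : u.1 * v.2 - u.2 * v.1 = 0 := h
    apply Prod.ext
    · simp only [Prod.smul_fst, Prod.smul_snd, smul_eq_mul]; rw [div_mul_eq_mul_div, eq_div_iff h1]
    · simp only [Prod.smul_fst, Prod.smul_snd, smul_eq_mul]; rw [div_mul_eq_mul_div, eq_div_iff h1]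
      nlinarith [h3]

lemma collinear_of_det2 (P X Y : ℝ × ℝ) (h : det2 (X - P) (Y - P) = 0) :
    Collinear ℝ ({P, X, Y} : Set (ℝ × ℝ)) := by
  rcases eq_or_ne X P with hXP | hXP
  · subst hXP
    have he : ({X, X, Y} : Set (ℝ × ℝ)) = {X, Y} := by
      simp [Set.insert_comm]
    rw [he]; exact collinear_pair ℝ X Y
  · rw [collinear_iff_of_mem (Set.mem_insert P {X, Y})]
    refine ⟨X - P, ?_⟩
    intro p hp
    rcases hp with hp | hp | hp
    · exact ⟨0, by simp [hp]⟩
    · exact ⟨1, by simp [hp]⟩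
    · obtain ⟨c, hc⟩ := exists_smul_of_det2 (X - P) (Y - P) (sub_ne_zero.mpr hXP) h
      refine ⟨c, ?_⟩
      simp only [Set.mem_singleton_iff] at hp
      rw [hp, ← hc]; simp


lemma sign_iff_le (sx t r : ℝ) (hs : sx ≠ 0) (ht : t ≠ r) :
    ((0 < sx ∧ t ≤ r) ∨ (sx < 0 ∧ r < t)) ↔ 0 < sx * (r - t) := by
  constructor
  · rintro (⟨h1, h2⟩ | ⟨h1, h2⟩)
    · have : t < r := lt_of_le_of_ne h2 ht
      nlinarith
    · nlinarith
  · intro h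
    rcases hs.lt_or_gt with h1 | h1
    · exact Or.inr ⟨h1, by nlinarith⟩
    · exact Or.inl ⟨h1, by nlinarith⟩

lemma sign_iff_lt (sx t r : ℝ) (hs : sx ≠ 0) (ht : t ≠ r) :
    ((0 < sx ∧ t < r) ∨ (sx < 0 ∧ r ≤ t)) ↔ 0 < sx * (r - t) := by
  rw [← sign_iff_le sx t r hs ht]
  constructor
  · rintro (⟨h1, h2⟩ | ⟨h1, h2⟩)
    · exact Or.inl ⟨h1, h2.le⟩
    · exact Or.inr ⟨h1, lt_of_le_of_ne h2 (Ne.symm ht)⟩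
  · rintro (⟨h1, h2⟩ | ⟨h1, h2⟩)
    · exact Or.inl ⟨h1, lt_of_le_of_ne h2 ht⟩
    · exact Or.inr ⟨h1, h2.le⟩

open Finset in
lemma sweep {α : Type*} [DecidableEq α] (T : Finset α) (s t : α → ℝ)
    (hs : ∀ X ∈ T, s X ≠ 0) (ht : ∀ X ∈ T, ∀ Y ∈ T, X ≠ Y → t X ≠ t Y)
    (K : ℕ) (hcard : T.card = 2 * K + 1) :
    ∃ Q ∈ T, ((T.erase Q).filter (fun X => 0 < s X * (t Q - t X))).card = K := by
  classical
  set Fr : ℝ → ℕ :=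
    fun r => (T.filter (fun X => (0 < s X ∧ t X ≤ r) ∨ (s X < 0 ∧ r < t X))).card with hFr
  set Fl : ℝ → ℕ :=
    fun r => (T.filter (fun X => (0 < s X ∧ t X < r) ∨ (s X < 0 ∧ r ≤ t X))).card with hFl
  set p : α → ℕ :=
    fun Q => ((T.erase Q).filter (fun X => 0 < s X * (t Q - t X))).card with hp
  -- generic counting step: filtering T vs filtering T.erase Q
  have hsplit : ∀ (Q : α), Q ∈ T → ∀ (c : α → Prop) (_ : DecidablePred c),
      (T.filter c).card = ((T.erase Q).filter c).card + (if c Q then 1 else 0) := by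
    intro Q hQ c hdec
    have hQnm : Q ∉ (T.erase Q).filter c := fun h => Finset.notMem_erase Q T (Finset.mem_of_mem_filter _ h)
    conv_lhs => rw [← Finset.insert_erase hQ, Finset.filter_insert]
    split_ifs with h
    · rw [Finset.card_insert_of_notMem hQnm]
    · rw [add_zero]
  -- step lemma
  have hstep : ∀ Q ∈ T, Fr (t Q) = p Q + (if 0 < s Q then 1 else 0) ∧
      Fl (t Q) = p Q + (if s Q < 0 then 1 else 0) := by
    intro Q hQ
    have key : ∀ X ∈ T.erase Q, s X ≠ 0 ∧ t X ≠ t Q := by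
      intro X hX
      exact ⟨hs X (Finset.mem_of_mem_erase hX),
        ht X (Finset.mem_of_mem_erase hX) Q hQ (Finset.ne_of_mem_erase hX)⟩
    constructor
    · have e2 : (T.erase Q).filter (fun X => (0 < s X ∧ t X ≤ t Q) ∨ (s X < 0 ∧ t Q < t X))
          = (T.erase Q).filter (fun X => 0 < s X * (t Q - t X)) := by
        apply Finset.filter_congr
        intro X hX
        obtain ⟨h1, h2⟩ := key X hX
        simpa using sign_iff_le (s X) (t X) (t Q) h1 h2
      show (T.filter _).card = _
      rw [hsplit Q hQ _ _, e2]
      congr 1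
      by_cases hQs : 0 < s Q
      · rw [if_pos (Or.inl ⟨hQs, le_refl _⟩), if_pos hQs]
      · rw [if_neg, if_neg hQs]
        rintro (⟨h1, _⟩ | ⟨_, h2⟩)
        · exact hQs h1
        · exact lt_irrefl _ h2
    · have e2 : (T.erase Q).filter (fun X => (0 < s X ∧ t X < t Q) ∨ (s X < 0 ∧ t Q ≤ t X))
          = (T.erase Q).filter (fun X => 0 < s X * (t Q - t X)) := by
        apply Finset.filter_congr
        intro X hX
        obtain ⟨h1, h2⟩ := key X hX
        simpa using sign_iff_lt (s X) (t X) (t Q) h1 h2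
      show (T.filter _).card = _
      rw [hsplit Q hQ _ _, e2]
      congr 1
      by_cases hQs : s Q < 0
      · rw [if_pos (Or.inr ⟨hQs, le_refl _⟩), if_pos hQs]
      · rw [if_neg, if_neg hQs]
        rintro (⟨_, h2⟩ | ⟨h1, _⟩)
        · exact lt_irrefl _ h2
        · exact hQs h1
  -- boundary values
  set A : ℕ := (T.filter (fun X => s X < 0)).card with hA
  set B : ℕ := (T.filter (fun X => 0 < s X)).card with hB
  have hABsum : A + B = 2 * K + 1 := by
    have hc : T.filter (fun X => ¬ s X < 0) = T.filter (fun X => 0 < s X) := by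
      apply Finset.filter_congr
      intro X hX
      have := hs X hX
      constructor
      · intro h
        exact lt_of_le_of_ne (not_lt.1 h) (Ne.symm this)
      · intro h h'
        exact absurd h (not_lt.2 h'.le)
    have h2 := Finset.card_filter_add_card_filter_not (s := T) (p := fun X => s X < 0)
    rw [hc] at h2
    omega
  set R : Finset ℝ := T.image t with hR
  have hTne : T.Nonempty := Finset.card_pos.1 (by omega)
  have hRne : R.Nonempty := hTne.image t
  have htR : ∀ X ∈ T, t X ∈ R := fun X hX => Finset.mem_image_of_mem t hX
  -- Fl at a root with no earlier root is A
  have hnoprev : ∀ r ∈ R, ¬ (R.filter (fun x => x < r)).Nonempty → Fl r = A := by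
    intro r hr hne
    have hge : ∀ x ∈ R, r ≤ x := by
      intro x hx
      by_contra hc
      exact hne ⟨x, Finset.mem_filter.2 ⟨hx, not_le.1 hc⟩⟩
    show (T.filter _).card = _
    congr 1
    apply Finset.filter_congr
    intro X hX
    have h1 : ¬ t X < r := not_lt.2 (hge _ (htR X hX))
    have h2 : r ≤ t X := hge _ (htR X hX)
    simp [h1, h2]
  -- Fr at the largest root is B
  have hFrmax : Fr (R.max' hRne) = B := by
    show (T.filter _).card = _
    congr 1
    apply Finset.filter_congr
    intro X hX
    have h1 : t X ≤ R.max' hRne := Finset.le_max' R _ (htR X hX)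
    have h2 : ¬ R.max' hRne < t X := not_lt.2 h1
    simp [h1, h2]
  -- Fl at a root equals Fr at the previous root
  have hprev : ∀ r ∈ R, ∀ (hne : (R.filter (fun x => x < r)).Nonempty),
      Fl r = Fr ((R.filter (fun x => x < r)).max' hne) := by
    intro r hr hne
    set r' := (R.filter (fun x => x < r)).max' hne with hr'def
    have hr'mem := (R.filter (fun x => x < r)).max'_mem hne
    have hr'R : r' ∈ R := (Finset.mem_filter.1 hr'mem).1
    have hr'lt : r' < r := (Finset.mem_filter.1 hr'mem).2
    show (T.filter _).card = (T.filter _).card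
    congr 1
    apply Finset.filter_congr
    intro X hX
    have hXR := htR X hX
    have iff1 : t X < r ↔ t X ≤ r' := by
      constructor
      · intro h
        exact Finset.le_max' (R.filter (fun x => x < r)) (t X) (Finset.mem_filter.2 ⟨hXR, h⟩)
      · intro h
        exact lt_of_le_of_lt h hr'lt
    have iff2 : r ≤ t X ↔ r' < t X := by
      constructor
      · intro h
        exact lt_of_lt_of_le hr'lt h
      · intro h
        by_contra hc
        exact absurd (iff1.1 (not_le.1 hc)) (not_le.2 h)
    rw [iff1, iff2]
  -- the two IVT cases
  by_cases hAle : A ≤ K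
  · -- A ≤ K, so B ≥ K+1
    have hB : K + 1 ≤ B := by omega
    have hR'ne : (R.filter (fun r => K + 1 ≤ Fr r)).Nonempty :=
      ⟨R.max' hRne, Finset.mem_filter.2 ⟨R.max'_mem hRne, by rw [hFrmax]; exact hB⟩⟩
    set r0 := (R.filter (fun r => K + 1 ≤ Fr r)).min' hR'ne with hr0def
    have hr0mem := (R.filter (fun r => K + 1 ≤ Fr r)).min'_mem hR'ne
    have hr0R : r0 ∈ R := (Finset.mem_filter.1 hr0mem).1
    have hFrr0 : K + 1 ≤ Fr r0 := (Finset.mem_filter.1 hr0mem).2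
    obtain ⟨Q, hQ, hQr⟩ := Finset.mem_image.1 hr0R
    have hFlr0 : Fl r0 ≤ K := by
      by_cases hne : (R.filter (fun x => x < r0)).Nonempty
      · rw [hprev r0 hr0R hne]
        set r' := (R.filter (fun x => x < r0)).max' hne with hr'def
        have hr'mem := (R.filter (fun x => x < r0)).max'_mem hne
        have hr'R : r' ∈ R := (Finset.mem_filter.1 hr'mem).1
        have hr'lt : r' < r0 := (Finset.mem_filter.1 hr'mem).2
        by_contra hc
        push_neg at hc
        have hmem : r' ∈ R.filter (fun r => K + 1 ≤ Fr r) := Finset.mem_filter.2 ⟨hr'R, hc⟩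
        have := Finset.min'_le _ _ hmem
        rw [← hr0def] at this
        exact absurd hr'lt (not_lt.2 this)
      · rw [hnoprev r0 hr0R hne]
        exact hAle
    obtain ⟨h1, h2⟩ := hstep Q hQ
    rw [hQr] at h1 h2
    refine ⟨Q, hQ, ?_⟩
    show p Q = K
    rcases (hs Q hQ).lt_or_gt with hsQ | hsQ
    · rw [if_neg (not_lt.2 hsQ.le)] at h1
      rw [if_pos hsQ] at h2
      omega
    · rw [if_pos hsQ] at h1
      rw [if_neg (not_lt.2 hsQ.le)] at h2
      omega
  · -- A ≥ K+1, so B ≤ K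
    have hB : B ≤ K := by omega
    have hR'ne : (R.filter (fun r => Fr r ≤ K)).Nonempty :=
      ⟨R.max' hRne, Finset.mem_filter.2 ⟨R.max'_mem hRne, by rw [hFrmax]; exact hB⟩⟩
    set r0 := (R.filter (fun r => Fr r ≤ K)).min' hR'ne with hr0def
    have hr0mem := (R.filter (fun r => Fr r ≤ K)).min'_mem hR'ne
    have hr0R : r0 ∈ R := (Finset.mem_filter.1 hr0mem).1
    have hFrr0 : Fr r0 ≤ K := (Finset.mem_filter.1 hr0mem).2
    obtain ⟨Q, hQ, hQr⟩ := Finset.mem_image.1 hr0R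
    have hFlr0 : K + 1 ≤ Fl r0 := by
      by_cases hne : (R.filter (fun x => x < r0)).Nonempty
      · rw [hprev r0 hr0R hne]
        set r' := (R.filter (fun x => x < r0)).max' hne with hr'def
        have hr'mem := (R.filter (fun x => x < r0)).max'_mem hne
        have hr'R : r' ∈ R := (Finset.mem_filter.1 hr'mem).1
        have hr'lt : r' < r0 := (Finset.mem_filter.1 hr'mem).2
        by_contra hc
        push_neg at hc
        have hc' : Fr r' ≤ K := by omega
        have hmem : r' ∈ R.filter (fun r => Fr r ≤ K) := Finset.mem_filter.2 ⟨hr'R, hc'⟩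
        have := Finset.min'_le _ _ hmem
        rw [← hr0def] at this
        exact absurd hr'lt (not_lt.2 this)
      · rw [hnoprev r0 hr0R hne]
        omega
    obtain ⟨h1, h2⟩ := hstep Q hQ
    rw [hQr] at h1 h2
    refine ⟨Q, hQ, ?_⟩
    show p Q = K
    rcases (hs Q hQ).lt_or_gt with hsQ | hsQ
    · rw [if_neg (not_lt.2 hsQ.le)] at h1
      rw [if_pos hsQ] at h2
      omega
    · rw [if_pos hsQ] at h1
      rw [if_neg (not_lt.2 hsQ.le)] at h2
      omega

/-- every point of `S` lies on some halving line; the underlying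
graph of `S` has no isolated vertices. -/
theorem stmt_0 (S : Finset (ℝ × ℝ)) (heven : Even S.card) (h4 : 4 ≤ S.card)
    (hgp : GenPos S) :
    ∀ P ∈ S, ∃ Q ∈ S, Q ≠ P ∧ IsHalving S P Q := by
  classical
  intro P hP
  set T := S.erase P with hT
  have hTcard : T.card = S.card - 1 := Finset.card_erase_of_mem hP
  obtain ⟨K, hK⟩ : ∃ K, S.card = 2 * K + 2 := by
    obtain ⟨m, hm⟩ := heven
    exact ⟨m - 1, by omega⟩
  have hK2 : (S.card - 2) / 2 = K := by omega
  have hTc : T.card = 2 * K + 1 := by omega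
  -- choose a generic sweep direction b = (1, sl)
  obtain ⟨sl, hsl⟩ := Infinite.exists_notMem_finset
    (T.image (fun X => (X.2 - P.2) / (X.1 - P.1)))
  set b : ℝ × ℝ := (1, sl) with hb
  set a : ℝ × ℝ := (-sl, 1) with ha
  have hsne : ∀ X ∈ T, det2 b (X - P) ≠ 0 := by
    intro X hX h
    have hXP : X ≠ P := Finset.ne_of_mem_erase hX
    have h' : (X.2 - P.2) - sl * (X.1 - P.1) = 0 := by
      simpa [det2, hb] using h
    by_cases h1 : X.1 - P.1 = 0
    · have h2 : X.2 - P.2 = 0 := by rw [h1] at h'; linarith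
      exact hXP (Prod.ext (by linarith) (by linarith))
    · apply hsl
      refine Finset.mem_image.2 ⟨X, hX, ?_⟩
      field_simp
      linarith
  set s : ℝ × ℝ → ℝ := fun X => det2 b (X - P) with hsdef
  set tf : ℝ × ℝ → ℝ := fun X => -(det2 a (X - P)) / det2 b (X - P) with htdef
  have hdetab : det2 b a = 1 + sl ^ 2 := by
    simp [det2, ha, hb]; ring
  have hdXY : ∀ X ∈ T, ∀ Y ∈ T, X ≠ Y → det2 (X - P) (Y - P) ≠ 0 := by
    intro X hX Y hY hXY h
    have hXS : X ∈ S := Finset.mem_of_mem_erase hX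
    have hYS : Y ∈ S := Finset.mem_of_mem_erase hY
    have hXP : X ≠ P := Finset.ne_of_mem_erase hX
    have hYP : Y ≠ P := Finset.ne_of_mem_erase hY
    exact hgp P hP X hXS Y hYS (Ne.symm hXP) (Ne.symm hYP) hXY (collinear_of_det2 P X Y h)
  have htinj : ∀ X ∈ T, ∀ Y ∈ T, X ≠ Y → tf X ≠ tf Y := by
    intro X hX Y hY hXY h
    have h1 := hsne X hX
    have h2 := hsne Y hY
    have h' : -(det2 a (X - P)) / det2 b (X - P) = -(det2 a (Y - P)) / det2 b (Y - P) := h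
    rw [div_eq_div_iff h1 h2] at h'
    have hc := det2_cauchy a b (X - P) (Y - P)
    have hab : det2 a b ≠ 0 := by
      have : det2 a b = -(det2 b a) := by simp [det2]; ring
      rw [this, hdetab]
      nlinarith
    apply hdXY X hX Y hY hXY
    have hz : det2 a b * det2 (X - P) (Y - P) = 0 := by
      rw [← hc]; nlinarith [h']
    rcases mul_eq_zero.1 hz with hz | hz
    · exact absurd hz hab
    · exact hz
  have key1 : ∀ X ∈ T, ∀ r : ℝ, det2 (a + r • b) (X - P) = s X * (r - tf X) := by
    intro X hX r
    have hsX : det2 b (X - P) ≠ 0 := hsne X hX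
    rw [det2_add_smul]
    show det2 a (X - P) + r * det2 b (X - P)
        = det2 b (X - P) * (r - (-(det2 a (X - P)) / det2 b (X - P)))
    field_simp
    ring
  obtain ⟨Q, hQT, hpQ⟩ := sweep T s tf hsne htinj K hTc
  have hQS : Q ∈ S := Finset.mem_of_mem_erase hQT
  have hQP : Q ≠ P := Finset.ne_of_mem_erase hQT
  -- the count on the other side is also K
  have hnz : ∀ X ∈ T.erase Q, s X * (tf Q - tf X) ≠ 0 := by
    intro X hX
    have hX1 : X ∈ T := Finset.mem_of_mem_erase hX
    have hX2 : X ≠ Q := Finset.ne_of_mem_erase hX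
    exact mul_ne_zero (hsne X hX1) (sub_ne_zero.2 (Ne.symm (htinj X hX1 Q hQT hX2)))
  have herase : (T.erase Q).card = 2 * K := by
    rw [Finset.card_erase_of_mem hQT]; omega
  have hqQ : ((T.erase Q).filter (fun X => s X * (tf Q - tf X) < 0)).card = K := by
    have hcg : (T.erase Q).filter (fun X => ¬ 0 < s X * (tf Q - tf X))
        = (T.erase Q).filter (fun X => s X * (tf Q - tf X) < 0) := by
      apply Finset.filter_congr
      intro X hX
      have := hnz X hX
      constructor
      · intro h
        exact lt_of_le_of_ne (not_lt.1 h) this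
      · intro h h'
        exact absurd h (not_lt.2 h'.le)
    have h2 := Finset.card_filter_add_card_filter_not
      (s := T.erase Q) (p := fun X => 0 < s X * (tf Q - tf X))
    rw [hcg] at h2
    omega
  -- direction vector of the line P Q
  set u : ℝ × ℝ := a + (tf Q) • b with hu
  have hu0 : det2 u (Q - P) = 0 := by
    rw [hu, key1 Q hQT]
    ring
  have hune : u ≠ 0 := by
    intro h
    have h1 : det2 b u = 1 + sl ^ 2 := by
      rw [hu, hb, ha]
      simp [det2]
      ring
    rw [h] at h1
    have : det2 b 0 = 0 := by simp [det2]
    rw [this] at h1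
    nlinarith
  obtain ⟨c, hc⟩ := exists_smul_of_det2 u (Q - P) hune hu0
  have hcne : c ≠ 0 := by
    rintro rfl
    rw [zero_smul] at hc
    exact hQP (by rwa [sub_eq_zero] at hc)
  have hdQ : ∀ X : ℝ × ℝ, X ∈ T → det2 (Q - P) (X - P) = c * (s X * (tf Q - tf X)) := by
    intro X hX
    rw [hc, det2_smul', key1 X hX]
  -- convert the two side-sets into Finset counts
  have hncard : ∀ cnd : ℝ × ℝ → Prop,
      {X ∈ (S : Set (ℝ × ℝ)) | cnd X}.ncard = (S.filter cnd).card := by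
    intro cnd
    rw [← Set.ncard_coe_finset]
    congr 1
    ext X
    simp
  have hSsplit : ∀ cnd : ℝ × ℝ → Prop, ¬ cnd P → ¬ cnd Q →
      S.filter cnd = (T.erase Q).filter cnd := by
    intro cnd hcP hcQ
    ext X
    simp only [Finset.mem_filter, Finset.mem_erase, hT]
    constructor
    · rintro ⟨hXS, hcX⟩
      refine ⟨⟨?_, ?_, hXS⟩, hcX⟩
      · rintro rfl; exact hcQ hcX
      · rintro rfl; exact hcP hcX
    · rintro ⟨⟨_, _, hXS⟩, hcX⟩
      exact ⟨hXS, hcX⟩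
  have hzeroP : det2 (Q - P) (P - P) = 0 := by simp [det2]
  have hzeroQ : det2 (Q - P) (Q - P) = 0 := by simp [det2]; ring
  have hpos : (S.filter (fun X => 0 < det2 (Q - P) (X - P))).card = K := by
    rw [hSsplit _ (by rw [hzeroP]; exact lt_irrefl 0) (by rw [hzeroQ]; exact lt_irrefl 0)]
    rcases hcne.lt_or_gt with hcn | hcp
    · rw [show (T.erase Q).filter (fun X => 0 < det2 (Q - P) (X - P))
          = (T.erase Q).filter (fun X => s X * (tf Q - tf X) < 0) from ?_]
      · exact hqQ
      apply Finset.filter_congr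
      intro X hX
      rw [hdQ X (Finset.mem_of_mem_erase hX)]
      constructor
      · intro h
        nlinarith
      · intro h
        nlinarith
    · rw [show (T.erase Q).filter (fun X => 0 < det2 (Q - P) (X - P))
          = (T.erase Q).filter (fun X => 0 < s X * (tf Q - tf X)) from ?_]
      · exact hpQ
      apply Finset.filter_congr
      intro X hX
      rw [hdQ X (Finset.mem_of_mem_erase hX)]
      have := hnz X hX
      constructor
      · intro h
        rcases this.lt_or_gt with h' | h'
        · nlinarith
        · exact h'
      · intro h
        nlinarith
  have hneg : (S.filter (fun X => det2 (Q - P) (X - P) < 0)).card = K := by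
    rw [hSsplit _ (by rw [hzeroP]; exact lt_irrefl 0) (by rw [hzeroQ]; exact lt_irrefl 0)]
    rcases hcne.lt_or_gt with hcn | hcp
    · rw [show (T.erase Q).filter (fun X => det2 (Q - P) (X - P) < 0)
          = (T.erase Q).filter (fun X => 0 < s X * (tf Q - tf X)) from ?_]
      · exact hpQ
      apply Finset.filter_congr
      intro X hX
      rw [hdQ X (Finset.mem_of_mem_erase hX)]
      constructor
      · intro h
        nlinarith
      · intro h
        nlinarith
    · rw [show (T.erase Q).filter (fun X => det2 (Q - P) (X - P) < 0)
          = (T.erase Q).filter (fun X => s X * (tf Q - tf X) < 0) from ?_]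
      · exact hqQ
      apply Finset.filter_congr
      intro X hX
      rw [hdQ X (Finset.mem_of_mem_erase hX)]
      have := hnz X hX
      constructor
      · intro h
        rcases this.lt_or_gt with h' | h'
        · exact h'
        · nlinarith
      · intro h
        nlinarith
  refine ⟨Q, hQS, hQP, hP, hQS, Ne.symm hQP, ?_, ?_⟩
  · rw [hncard, hK2]
    exact hpos
  · rw [hncard, hK2]
    exact hneg
end

section
/- If P ∈ S is a vertex of the convex hull of S (i.e., P does not belong to the convex hull of S \ {P}), then there is exactly one point Q ∈ S such that the line through P and Q is a halving line of S. -/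
lemma det2_identity (w u v : ℝ × ℝ) :
    det2 u v * dot2 w w = dot2 w u * det2 w v - det2 w u * dot2 w v := by
  simp only [det2, dot2]; ring

lemma collinear_of_det2_eq_zero {P Q X : ℝ × ℝ} (h : det2 (Q - P) (X - P) = 0) :
    Collinear ℝ ({P, Q, X} : Set (ℝ × ℝ)) := by
  by_cases hQP : Q = P
  · subst hQP
    have : ({Q, Q, X} : Set (ℝ × ℝ)) = {Q, X} := by simp
    rw [this]; exact collinear_pair ℝ Q X
  · set u := Q - P with hu
    have hune : u ≠ 0 := sub_ne_zero.mpr hQP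
    have hdet : u.1 * (X.2 - P.2) - u.2 * (X.1 - P.1) = 0 := by
      have := h; simp only [det2, Prod.fst_sub, Prod.snd_sub] at this; linarith
    have hc : ∃ c : ℝ, X - P = c • u := by
      by_cases h1 : u.1 = 0
      · have h2 : u.2 ≠ 0 := fun h2 => hune (Prod.ext h1 h2)
        refine ⟨(X.2 - P.2) / u.2, ?_⟩
        have hX1 : X.1 - P.1 = 0 := by
          have h3 : u.2 * (X.1 - P.1) = 0 := by rw [h1] at hdet; linarith
          exact (mul_eq_zero.mp h3).resolve_left h2
        apply Prod.ext <;>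
          simp [Prod.smul_def, h1, hX1, div_mul_cancel₀ _ h2]
      · refine ⟨(X.1 - P.1) / u.1, ?_⟩
        have hX2 : X.2 - P.2 = (X.1 - P.1) / u.1 * u.2 := by
          field_simp; linarith
        apply Prod.ext <;>
          simp [Prod.smul_def, div_mul_cancel₀ _ h1, hX2]
    obtain ⟨c, hc⟩ := hc
    rw [collinear_iff_of_mem (Set.mem_insert P _)]
    refine ⟨u, ?_⟩
    intro p hp
    rcases hp with rfl | rfl | rfl
    · exact ⟨0, by simp⟩
    · exact ⟨1, by simp [hu]⟩
    · exact ⟨c, by rw [← hc]; simp⟩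

lemma median_exists_unique {α : Type*} [DecidableEq α] (T : Finset α) (k : α → ℝ)
    (hk : Set.InjOn k T) (m : ℕ) (hm : m < T.card) :
    ∃! Q : α, Q ∈ T ∧ (T.filter fun X => k Q < k X).card = m := by
  classical
  set cnt : α → ℕ := fun Q => (T.filter fun X => k Q < k X).card with hcnt
  have hmono : ∀ Q ∈ T, ∀ R ∈ T, k Q < k R → cnt R < cnt Q := by
    intro Q hQ R hR hlt
    apply Finset.card_lt_card
    have hsub : (T.filter fun X => k R < k X) ⊆ (T.filter fun X => k Q < k X) := by
      intro X hX
      simp only [Finset.mem_filter] at hX ⊢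
      exact ⟨hX.1, hlt.trans hX.2⟩
    rw [Finset.ssubset_iff_of_subset hsub]
    exact ⟨R, by simp [hR, hlt], by simp⟩
  have hinj : Set.InjOn cnt T := by
    intro Q hQ R hR h
    by_contra hne
    have : k Q ≠ k R := fun hkk => hne (hk hQ hR hkk)
    rcases this.lt_or_gt with hlt | hlt
    · exact absurd h (by have := hmono Q hQ R hR hlt; omega)
    · exact absurd h (by have := hmono R hR Q hQ hlt; omega)
  have hltc : ∀ Q ∈ T, cnt Q < T.card := by
    intro Q hQ
    apply Finset.card_lt_card
    rw [Finset.ssubset_iff_of_subset (Finset.filter_subset _ _)]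
    exact ⟨Q, hQ, by simp⟩
  have himg : T.image cnt = Finset.range T.card := by
    apply Finset.eq_of_subset_of_card_le
    · intro x hx
      obtain ⟨Q, hQ, rfl⟩ := Finset.mem_image.mp hx
      exact Finset.mem_range.mpr (hltc Q hQ)
    · rw [Finset.card_range, Finset.card_image_of_injOn hinj]
  have : m ∈ T.image cnt := himg ▸ Finset.mem_range.mpr hm
  obtain ⟨Q, hQ, hQm⟩ := Finset.mem_image.mp this
  exact ⟨Q, ⟨hQ, hQm⟩, fun R ⟨hR, hRm⟩ => hinj (by exact_mod_cast hR) hQ (hRm.trans hQm.symm)⟩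

/-- a vertex of the convex hull of `S` lies on exactly one
halving line of `S`. -/
theorem stmt_1 (S : Finset (ℝ × ℝ)) (heven : Even S.card) (h4 : 4 ≤ S.card)
    (hgp : GenPos S) (P : ℝ × ℝ) (hP : P ∈ S)
    (hhull : P ∉ convexHull ℝ (↑(S.erase P) : Set (ℝ × ℝ))) :
    ∃! Q : ℝ × ℝ, IsHalving S P Q := by
  classical
  set T := S.erase P with hT
  have hTcard : T.card = S.card - 1 := Finset.card_erase_of_mem hP
  -- separate P from the other points
  have hclosed : IsClosed (convexHull ℝ (↑T : Set (ℝ × ℝ))) :=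
    (T.finite_toSet.isCompact_convexHull (𝕜 := ℝ)).isClosed
  obtain ⟨f, u0, hfu, hfb⟩ :=
    geometric_hahn_banach_point_closed (convex_convexHull ℝ _) hclosed hhull
  set w : ℝ × ℝ := (f (1, 0), f (0, 1)) with hw
  have hfdot : ∀ v : ℝ × ℝ, dot2 w v = f v := by
    intro v
    have hv : (v.1 • ((1 : ℝ), (0 : ℝ)) + v.2 • ((0 : ℝ), (1 : ℝ))) = v := by
      apply Prod.ext <;> simp
    calc dot2 w v = v.1 * f (1, 0) + v.2 * f (0, 1) := by
          rw [hw]; simp [dot2]; ring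
      _ = f (v.1 • ((1 : ℝ), (0 : ℝ)) + v.2 • ((0 : ℝ), (1 : ℝ))) := by
          rw [map_add, map_smul, map_smul]; simp [smul_eq_mul]
      _ = f v := by rw [hv]
  have ha : ∀ X ∈ T, 0 < dot2 w (X - P) := by
    intro X hX
    rw [hfdot, map_sub]
    have : u0 < f X := hfb X (subset_convexHull ℝ _ (Finset.mem_coe.mpr hX))
    linarith
  have hTne : T.Nonempty := by
    rw [← Finset.card_pos, hTcard]; omega
  have hww : 0 < dot2 w w := by
    obtain ⟨X, hX⟩ := hTne
    have hw0 : w ≠ 0 := by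
      intro h
      have := ha X hX
      rw [h] at this
      simp [dot2] at this
    have h12 : w.1 ≠ 0 ∨ w.2 ≠ 0 := by
      by_contra h
      push_neg at h
      exact hw0 (Prod.ext h.1 h.2)
    rcases h12 with h | h
    · have := mul_self_pos.mpr h
      have := mul_self_nonneg w.2
      simp only [dot2]; linarith
    · have := mul_self_pos.mpr h
      have := mul_self_nonneg w.1
      simp only [dot2]; linarith
  set k : ℝ × ℝ → ℝ := fun X => det2 w (X - P) / dot2 w (X - P) with hk
  have hkey : ∀ Q ∈ T, ∀ X ∈ T, det2 (Q - P) (X - P) * dot2 w w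
      = dot2 w (Q - P) * dot2 w (X - P) * (k X - k Q) := by
    intro Q hQ X hX
    have haQ := ha Q hQ
    have haX := ha X hX
    have hkQ : k Q * dot2 w (Q - P) = det2 w (Q - P) := div_mul_cancel₀ _ haQ.ne'
    have hkX : k X * dot2 w (X - P) = det2 w (X - P) := div_mul_cancel₀ _ haX.ne'
    rw [det2_identity w (Q - P) (X - P), ← hkQ, ← hkX]; ring
  have hsign : ∀ Q ∈ T, ∀ X ∈ T, (0 < det2 (Q - P) (X - P) ↔ k Q < k X) := by
    intro Q hQ X hX
    have h := hkey Q hQ X hX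
    have h1 := ha Q hQ
    have h2 := ha X hX
    have hp2 : 0 < dot2 w (Q - P) * dot2 w (X - P) := mul_pos h1 h2
    constructor
    · intro hd
      have hp1 : 0 < det2 (Q - P) (X - P) * dot2 w w := mul_pos hd hww
      rw [h] at hp1
      nlinarith [hp1, hp2]
    · intro hd
      have hp1 : 0 < dot2 w (Q - P) * dot2 w (X - P) * (k X - k Q) :=
        mul_pos hp2 (sub_pos.mpr hd)
      rw [← h] at hp1
      nlinarith [hp1, hww]
  have hsignneg : ∀ Q ∈ T, ∀ X ∈ T, (det2 (Q - P) (X - P) < 0 ↔ k X < k Q) := by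
    intro Q hQ X hX
    have h := hkey Q hQ X hX
    have h1 := ha Q hQ
    have h2 := ha X hX
    have hp2 : 0 < dot2 w (Q - P) * dot2 w (X - P) := mul_pos h1 h2
    constructor
    · intro hd
      have hp1 : det2 (Q - P) (X - P) * dot2 w w < 0 := mul_neg_of_neg_of_pos hd hww
      rw [h] at hp1
      nlinarith [hp1, hp2]
    · intro hd
      have hp1 : dot2 w (Q - P) * dot2 w (X - P) * (k X - k Q) < 0 :=
        mul_neg_of_pos_of_neg hp2 (sub_neg.mpr hd)
      rw [← h] at hp1
      nlinarith [hp1, hww]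
  have hkinj : Set.InjOn k T := by
    intro Q hQ X hX hkk
    by_contra hne
    have hQ' : Q ∈ S := Finset.mem_of_mem_erase hQ
    have hX' : X ∈ S := Finset.mem_of_mem_erase hX
    have hQP : Q ≠ P := Finset.ne_of_mem_erase hQ
    have hXP : X ≠ P := Finset.ne_of_mem_erase hX
    apply hgp P hP Q hQ' X hX' (Ne.symm hQP) (Ne.symm hXP) hne
    apply collinear_of_det2_eq_zero
    have h := hkey Q hQ X hX
    rw [hkk, sub_self, mul_zero] at h
    exact (mul_eq_zero.mp h).resolve_right hww.ne'
  obtain ⟨p, hp⟩ := heven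
  set m := (S.card - 2) / 2 with hm
  have hmlt : m < T.card := by rw [hTcard]; omega
  obtain ⟨Q, ⟨hQT, hQm⟩, huniq⟩ := median_exists_unique T k hkinj m hmlt
  have hdetP : ∀ R : ℝ × ℝ, det2 (R - P) (P - P) = 0 := by
    intro R; simp [det2]
  have hposset : ∀ R ∈ T,
      {X ∈ (↑S : Set (ℝ × ℝ)) | 0 < det2 (R - P) (X - P)}
        = ↑(T.filter fun X => k R < k X) := by
    intro R hR
    ext X
    simp only [Set.mem_setOf_eq, Finset.coe_filter, Finset.mem_coe]
    constructor
    · rintro ⟨hXS, hdet⟩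
      have hXP : X ≠ P := by
        rintro rfl
        rw [hdetP R] at hdet
        exact lt_irrefl 0 hdet
      have hXT : X ∈ T := Finset.mem_erase.mpr ⟨hXP, hXS⟩
      exact ⟨hXT, (hsign R hR X hXT).mp hdet⟩
    · rintro ⟨hXT, hlt⟩
      exact ⟨Finset.mem_of_mem_erase hXT, (hsign R hR X hXT).mpr hlt⟩
  have hnegset : ∀ R ∈ T,
      {X ∈ (↑S : Set (ℝ × ℝ)) | det2 (R - P) (X - P) < 0}
        = ↑(T.filter fun X => k X < k R) := by
    intro R hR
    ext X
    simp only [Set.mem_setOf_eq, Finset.coe_filter, Finset.mem_coe]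
    constructor
    · rintro ⟨hXS, hdet⟩
      have hXP : X ≠ P := by
        rintro rfl
        rw [hdetP R] at hdet
        exact lt_irrefl 0 hdet
      have hXT : X ∈ T := Finset.mem_erase.mpr ⟨hXP, hXS⟩
      exact ⟨hXT, (hsignneg R hR X hXT).mp hdet⟩
    · rintro ⟨hXT, hlt⟩
      exact ⟨Finset.mem_of_mem_erase hXT, (hsignneg R hR X hXT).mpr hlt⟩
  have hnegcard : ∀ R ∈ T, (T.filter fun X => k X < k R).card
      = T.card - 1 - (T.filter fun X => k R < k X).card := by
    intro R hR
    have h1 := Finset.card_filter_add_card_filter_not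
      (s := T) (p := fun X => k R < k X)
    have h2 : T.filter (fun X => ¬ k R < k X)
        = insert R (T.filter fun X => k X < k R) := by
      ext X
      simp only [Finset.mem_filter, Finset.mem_insert, not_lt]
      constructor
      · rintro ⟨hXT, hle⟩
        rcases hle.lt_or_eq with h | h
        · right; exact ⟨hXT, h⟩
        · left; exact hkinj hXT hR h
      · rintro (rfl | ⟨hXT, hlt⟩)
        · exact ⟨hR, le_refl _⟩
        · exact ⟨hXT, hlt.le⟩
    have h3 : R ∉ T.filter fun X => k X < k R := by simp
    rw [h2, Finset.card_insert_of_notMem h3] at h1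
    omega
  refine ⟨Q, ?_, ?_⟩
  · refine ⟨hP, Finset.mem_of_mem_erase hQT, (Finset.ne_of_mem_erase hQT).symm, ?_, ?_⟩
    · rw [hposset Q hQT, Set.ncard_coe_finset, hQm]
    · rw [hnegset Q hQT, Set.ncard_coe_finset, hnegcard Q hQT, hQm, hTcard]
      omega
  · rintro Q' ⟨_, hQ'S, hPQ', hpos', _⟩
    have hQ'T : Q' ∈ T := Finset.mem_erase.mpr ⟨Ne.symm hPQ', hQ'S⟩
    apply huniq
    refine ⟨hQ'T, ?_⟩
    rw [hposset Q' hQ'T, Set.ncard_coe_finset] at hpos'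
    exact hpos'
end

section
/- The underlying graph of S has at least three leaves; that is, there exist at least three distinct points of S each of which lies on exactly one halving line of S. -/
lemma det2_eq_zero_exists {d w : ℝ × ℝ} (hd : d ≠ 0) (h : det2 d w = 0) :
    ∃ r : ℝ, w = r • d := by
  have hdet : d.1 * w.2 - d.2 * w.1 = 0 := h
  have hcomp : d.1 ≠ 0 ∨ d.2 ≠ 0 := by
    by_contra hc
    push_neg at hc
    exact hd (Prod.ext hc.1 hc.2)
  rcases hcomp with h1 | h2
  · refine ⟨w.1 / d.1, Prod.ext ?_ ?_⟩
    · simp only [Prod.smul_fst, smul_eq_mul]; field_simp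
    · simp only [Prod.smul_snd, smul_eq_mul]; field_simp; nlinarith [hdet]
  · refine ⟨w.2 / d.2, Prod.ext ?_ ?_⟩
    · simp only [Prod.smul_fst, smul_eq_mul]; field_simp; nlinarith [hdet]
    · simp only [Prod.smul_snd, smul_eq_mul]; field_simp

lemma collinear_of_det2_s2 (A B C : ℝ × ℝ) (h : det2 (B - A) (C - A) = 0) :
    Collinear ℝ ({A, B, C} : Set (ℝ × ℝ)) := by
  rcases eq_or_ne B A with hBA | hBA
  · have he : ({A, B, C} : Set (ℝ × ℝ)) = {A, C} := by rw [hBA]; simp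
    rw [he]; exact collinear_pair ℝ A C
  · rw [collinear_iff_of_mem (show A ∈ ({A, B, C} : Set (ℝ × ℝ)) by simp)]
    refine ⟨B - A, fun p hp => ?_⟩
    have hd : B - A ≠ 0 := sub_ne_zero.2 hBA
    simp only [Set.mem_insert_iff, Set.mem_singleton_iff] at hp
    rcases hp with rfl | rfl | rfl
    · exact ⟨0, by simp⟩
    · exact ⟨1, by simp⟩
    · obtain ⟨r, hr⟩ := det2_eq_zero_exists hd h
      exact ⟨r, by rw [← hr]; simp⟩

lemma genpos_det2_ne {S : Finset (ℝ × ℝ)} (hgp : GenPos S) {P X Y : ℝ × ℝ}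
    (hP : P ∈ S) (hX : X ∈ S) (hY : Y ∈ S) (h1 : P ≠ X) (h2 : P ≠ Y) (h3 : X ≠ Y) :
    det2 (X - P) (Y - P) ≠ 0 := fun h =>
  hgp P hP X hX Y hY h1 h2 h3 (collinear_of_det2_s2 P X Y h)

-- det of parallel vectors

lemma det2_of_both_parallel {a b c : ℝ × ℝ} (ha : a ≠ 0)
    (hab : det2 a b = 0) (hac : det2 a c = 0) : det2 b c = 0 := by
  have h1 : det2 b c * a.1 = det2 a c * b.1 - det2 a b * c.1 := by
    unfold det2; ring
  have h2 : det2 b c * a.2 = det2 a c * b.2 - det2 a b * c.2 := by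
    unfold det2; ring
  rw [hab, hac] at h1 h2
  simp at h1 h2
  rcases h1 with h1 | h1 <;> rcases h2 with h2 | h2 <;> first | assumption | exact absurd (Prod.ext h1 h2) ha

lemma det2_self_sub (u : ℝ × ℝ) : det2 u u = 0 := by unfold det2; ring

lemma det2_zero_right (u : ℝ × ℝ) : det2 u (0 : ℝ × ℝ) = 0 := by
  unfold det2; simp

lemma det2_zero_left (u : ℝ × ℝ) : det2 (0 : ℝ × ℝ) u = 0 := by
  unfold det2; simp

lemma det2_antisymm (u v : ℝ × ℝ) : det2 u v = - det2 v u := by unfold det2; ring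

/-- key transitivity identity -/

lemma det2_trans {v a b c : ℝ × ℝ} (hva : 0 < dot2 v a) (hvb : 0 < dot2 v b)
    (hvc : 0 < dot2 v c) (hab : 0 < det2 a b) (hbc : 0 < det2 b c) :
    0 < det2 a c := by
  have key : det2 a c * dot2 v b = det2 a b * dot2 v c + det2 b c * dot2 v a := by
    unfold det2 dot2; ring
  nlinarith

lemma degree_one (S : Finset (ℝ × ℝ)) (heven : Even S.card) (h4 : 4 ≤ S.card)
    (hgp : GenPos S) (P : ℝ × ℝ) (hP : P ∈ S) (v : ℝ × ℝ)
    (hv : ∀ X ∈ S, X ≠ P → 0 < dot2 v (X - P)) : hdeg S P = 1 := by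
  classical
  set n := S.card with hn
  obtain ⟨l, hl⟩ := heven
  set k := (n - 2) / 2 with hk
  set T := S.erase P with hT
  have hm : T.card = n - 1 := Finset.card_erase_of_mem hP
  -- each X in T satisfies the halfplane condition
  have hvT : ∀ X ∈ T, 0 < dot2 v (X - P) := fun X hX =>
    hv X (Finset.mem_of_mem_erase hX) (Finset.ne_of_mem_erase hX)
  have hdetne : ∀ X ∈ T, ∀ Y ∈ T, X ≠ Y → det2 (X - P) (Y - P) ≠ 0 := by
    intro X hX Y hY hXY
    exact genpos_det2_ne hgp hP (Finset.mem_of_mem_erase hX) (Finset.mem_of_mem_erase hY)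
      (Ne.symm (Finset.ne_of_mem_erase hX)) (Ne.symm (Finset.ne_of_mem_erase hY)) hXY
  set below : (ℝ × ℝ) → ℕ := fun Q => (T.filter (fun X => 0 < det2 (X - P) (Q - P))).card
    with hbelow
  set above : (ℝ × ℝ) → ℕ := fun Q => (T.filter (fun X => 0 < det2 (Q - P) (X - P))).card
    with habove
  -- partition
  have hpart : ∀ Q ∈ T, below Q + above Q = n - 2 := by
    intro Q hQ
    have hdisj : Disjoint (T.filter (fun X => 0 < det2 (X - P) (Q - P)))
        (T.filter (fun X => 0 < det2 (Q - P) (X - P))) := by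
      rw [Finset.disjoint_left]
      intro X hX hX'
      obtain ⟨-, h1⟩ := Finset.mem_filter.1 hX
      obtain ⟨-, h2⟩ := Finset.mem_filter.1 hX'
      rw [det2_antisymm] at h1
      linarith
    have hunion : (T.filter (fun X => 0 < det2 (X - P) (Q - P))) ∪
        (T.filter (fun X => 0 < det2 (Q - P) (X - P))) = T.erase Q := by
      ext X
      simp only [Finset.mem_union, Finset.mem_filter, Finset.mem_erase]
      constructor
      · rintro (⟨hX, h⟩ | ⟨hX, h⟩) <;> refine ⟨?_, hX⟩ <;> rintro rfl <;>
          simp [det2_self_sub] at h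
      · rintro ⟨hne, hX⟩
        rcases lt_trichotomy (det2 (X - P) (Q - P)) 0 with h | h | h
        · right
          refine ⟨hX, ?_⟩
          rw [det2_antisymm] at h
          linarith
        · exact absurd h (hdetne X hX Q hQ hne)
        · exact Or.inl ⟨hX, h⟩
    have := Finset.card_union_of_disjoint hdisj
    rw [hunion, Finset.card_erase_of_mem hQ, hm] at this
    simp only [hbelow, habove]
    omega
  -- strict monotonicity
  have hmono : ∀ Q ∈ T, ∀ Q' ∈ T, 0 < det2 (Q - P) (Q' - P) → below Q < below Q' := by
    intro Q hQ Q' hQ' hlt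
    have hQmem : Q ∉ T.filter (fun X => 0 < det2 (X - P) (Q - P)) := by
      simp [det2_self_sub]
    have hsub : insert Q (T.filter (fun X => 0 < det2 (X - P) (Q - P))) ⊆
        T.filter (fun X => 0 < det2 (X - P) (Q' - P)) := by
      intro X hX
      rcases Finset.mem_insert.1 hX with rfl | hX
      · exact Finset.mem_filter.2 ⟨hQ, hlt⟩
      · obtain ⟨hXT, hXQ⟩ := Finset.mem_filter.1 hX
        exact Finset.mem_filter.2 ⟨hXT, det2_trans (hvT X hXT) (hvT Q hQ) (hvT Q' hQ') hXQ hlt⟩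
    have := Finset.card_le_card hsub
    rw [Finset.card_insert_of_notMem hQmem] at this
    simp only [hbelow]
    omega
  have hinj : ∀ Q ∈ T, ∀ Q' ∈ T, Q ≠ Q' → below Q ≠ below Q' := by
    intro Q hQ Q' hQ' hne
    rcases lt_trichotomy (det2 (Q - P) (Q' - P)) 0 with h | h | h
    · have : 0 < det2 (Q' - P) (Q - P) := by rw [det2_antisymm]; linarith
      exact (hmono Q' hQ' Q hQ this).ne'
    · exact absurd h (hdetne Q hQ Q' hQ' hne)
    · exact (hmono Q hQ Q' hQ' h).ne
  -- surjectivity onto range (n-1)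
  have hlt' : ∀ Q ∈ T, below Q < n - 1 := by
    intro Q hQ
    have := hpart Q hQ
    omega
  have himage : T.image below = Finset.range (n - 1) := by
    apply Finset.eq_of_subset_of_card_le
    · intro x hx
      obtain ⟨Q, hQ, rfl⟩ := Finset.mem_image.1 hx
      exact Finset.mem_range.2 (hlt' Q hQ)
    · rw [Finset.card_range, ← hm]
      exact le_of_eq (Finset.card_image_of_injOn (fun Q hQ Q' hQ' h => by
        by_contra hne
        exact hinj Q hQ Q' hQ' hne h)).symm
  have hkmem : k ∈ Finset.range (n - 1) := Finset.mem_range.2 (by omega)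
  rw [← himage] at hkmem
  obtain ⟨Q₀, hQ₀T, hQ₀⟩ := Finset.mem_image.1 hkmem
  -- characterization of halving in terms of below/above
  have hchar : ∀ Q : ℝ × ℝ, IsHalving S P Q ↔ Q ∈ T ∧ below Q = k ∧ above Q = k := by
    intro Q
    have hset1 : {X ∈ (S : Set (ℝ × ℝ)) | 0 < det2 (Q - P) (X - P)}.ncard = above Q := by
      have : {X ∈ (S : Set (ℝ × ℝ)) | 0 < det2 (Q - P) (X - P)} =
          ↑(S.filter (fun X => 0 < det2 (Q - P) (X - P))) := by
        ext X; simp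
      rw [this, Set.ncard_coe_finset]
      simp only [habove, hT, Finset.filter_erase]
      rw [Finset.erase_eq_of_notMem]
      simp [det2_zero_right]
    have hset2 : {X ∈ (S : Set (ℝ × ℝ)) | det2 (Q - P) (X - P) < 0}.ncard = below Q := by
      have : {X ∈ (S : Set (ℝ × ℝ)) | det2 (Q - P) (X - P) < 0} =
          ↑(S.filter (fun X => 0 < det2 (X - P) (Q - P))) := by
        ext X
        simp only [Set.mem_setOf_eq, Finset.coe_filter, Finset.mem_coe]
        constructor
        · rintro ⟨h1, h2⟩; rw [det2_antisymm] at h2; exact ⟨h1, by linarith⟩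
        · rintro ⟨h1, h2⟩; rw [det2_antisymm] at h2; exact ⟨h1, by linarith⟩
      rw [this, Set.ncard_coe_finset]
      simp only [hbelow, hT, Finset.filter_erase]
      rw [Finset.erase_eq_of_notMem]
      simp [det2_zero_left]
    constructor
    · rintro ⟨-, hQS, hPQ, h1, h2⟩
      rw [hset1] at h1; rw [hset2] at h2
      exact ⟨Finset.mem_erase.2 ⟨Ne.symm hPQ, hQS⟩, h2, h1⟩
    · rintro ⟨hQT, h1, h2⟩
      refine ⟨hP, Finset.mem_of_mem_erase hQT, Ne.symm (Finset.ne_of_mem_erase hQT), ?_, ?_⟩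
      · rw [hset1]; exact h2
      · rw [hset2]; exact h1
  -- Q₀ is halving
  have hQ₀halving : IsHalving S P Q₀ := by
    rw [hchar]
    refine ⟨hQ₀T, hQ₀, ?_⟩
    have := hpart Q₀ hQ₀T
    omega
  -- the set of halving partners is {Q₀}
  have hseteq : {Q : ℝ × ℝ | IsHalving S P Q} = {Q₀} := by
    ext Q
    simp only [Set.mem_setOf_eq, Set.mem_singleton_iff]
    constructor
    · intro h
      obtain ⟨hQT, h1, -⟩ := (hchar Q).1 h
      by_contra hne
      exact hinj Q hQT Q₀ hQ₀T hne (h1.trans hQ₀.symm)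
    · rintro rfl; exact hQ₀halving
  rw [hdeg, hseteq]
  exact Set.ncard_singleton _

lemma dot2_eq_clm (f : ℝ × ℝ →L[ℝ] ℝ) (u : ℝ × ℝ) :
    dot2 (f (1, 0), f (0, 1)) u = f u := by
  have : u = u.1 • ((1 : ℝ), (0 : ℝ)) + u.2 • ((0 : ℝ), (1 : ℝ)) := by
    apply Prod.ext <;> simp
  rw [show f u = f (u.1 • ((1 : ℝ), (0 : ℝ)) + u.2 • ((0 : ℝ), (1 : ℝ))) from by rw [← this]]
  rw [map_add, map_smul, map_smul]
  unfold dot2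
  simp [mul_comm]

lemma extreme_direction {S : Finset (ℝ × ℝ)} {R : ℝ × ℝ} (hR : R ∈ S)
    (hext : R ∉ convexHull ℝ ((S : Set (ℝ × ℝ)) \ {R})) :
    ∃ v : ℝ × ℝ, ∀ X ∈ S, X ≠ R → 0 < dot2 v (X - R) := by
  have hfin : ((S : Set (ℝ × ℝ)) \ {R}).Finite := (S.finite_toSet.subset Set.diff_subset)
  have hcl : IsClosed (convexHull ℝ ((S : Set (ℝ × ℝ)) \ {R})) :=
    (hfin.isCompact_convexHull ℝ).isClosed
  obtain ⟨f, u, hfu, huR⟩ := geometric_hahn_banach_closed_point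
    (convex_convexHull ℝ _) hcl hext
  refine ⟨(-(f (1, 0)), -(f (0, 1))), fun X hX hXR => ?_⟩
  have hXmem : X ∈ convexHull ℝ ((S : Set (ℝ × ℝ)) \ {R}) :=
    subset_convexHull ℝ _ ⟨hX, hXR⟩
  have hfX : f X < f R := lt_trans (hfu X hXmem) huR
  have h1 : dot2 (f (1, 0), f (0, 1)) (X - R) = f X - f R := by
    rw [dot2_eq_clm, map_sub]
  have h2 : dot2 (-(f (1, 0)), -(f (0, 1))) (X - R) =
      - dot2 (f (1, 0), f (0, 1)) (X - R) := by unfold dot2; ring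
  rw [h2, h1]
  linarith

/-- the underlying graph of `S` has at least three leaves. -/
theorem stmt_2 (S : Finset (ℝ × ℝ)) (heven : Even S.card) (h4 : 4 ≤ S.card)
    (hgp : GenPos S) :
    ∃ P Q R : ℝ × ℝ, P ∈ S ∧ Q ∈ S ∧ R ∈ S ∧ P ≠ Q ∧ P ≠ R ∧ Q ≠ R ∧
      hdeg S P = 1 ∧ hdeg S Q = 1 ∧ hdeg S R = 1 := by
  classical
  -- generic direction
  obtain ⟨t, ht⟩ : ∃ t : ℝ, t ∉ (fun p : (ℝ × ℝ) × (ℝ × ℝ) =>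
      (p.2.1 - p.1.1) / (p.1.2 - p.2.2)) '' ((S ×ˢ S : Finset _) : Set _) :=
    (((S ×ˢ S).finite_toSet).image _).exists_notMem
  set f : ℝ × ℝ → ℝ := fun X => X.1 + t * X.2 with hf
  have hinj : ∀ X ∈ S, ∀ Y ∈ S, X ≠ Y → f X ≠ f Y := by
    intro X hX Y hY hXY heq
    rcases eq_or_ne X.2 Y.2 with h2 | h2
    · apply hXY
      apply Prod.ext _ h2
      simp only [hf] at heq
      rw [h2] at heq
      linarith
    · apply ht
      refine ⟨(X, Y), by simp [Finset.mem_product, hX, hY], ?_⟩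
      simp only
      field_simp [sub_ne_zero.2 h2]
      simp only [hf] at heq
      ring_nf
      nlinarith [heq]
  have hSne : S.Nonempty := Finset.card_pos.1 (by omega)
  obtain ⟨P, hPS, hPmin⟩ := Finset.exists_min_image S f hSne
  obtain ⟨Q, hQS, hQmax⟩ := Finset.exists_max_image S f hSne
  have hPstrict : ∀ X ∈ S, X ≠ P → f P < f X := fun X hX hXP =>
    lt_of_le_of_ne (hPmin X hX) (fun h => hinj P hPS X hX (Ne.symm hXP) h)
  have hQstrict : ∀ X ∈ S, X ≠ Q → f X < f Q := fun X hX hXQ =>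
    lt_of_le_of_ne (hQmax X hX) (hinj X hX Q hQS hXQ)
  have hPQ : P ≠ Q := by
    obtain ⟨X, hX, hXP⟩ := Finset.exists_mem_ne (show 1 < S.card by omega) P
    intro h
    have h1 := hPstrict X hX hXP
    have h2 := hQmax X hX
    rw [← h] at h2
    linarith
  have hdegP : hdeg S P = 1 := by
    apply degree_one S heven h4 hgp P hPS (1, t)
    intro X hX hXP
    have := hPstrict X hX hXP
    simp only [hf] at this
    unfold dot2
    simp only [Prod.fst_sub, Prod.snd_sub]
    nlinarith
  have hdegQ : hdeg S Q = 1 := by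
    apply degree_one S heven h4 hgp Q hQS (-1, -t)
    intro X hX hXQ
    have := hQstrict X hX hXQ
    simp only [hf] at this
    unfold dot2
    simp only [Prod.fst_sub, Prod.snd_sub]
    nlinarith
  -- third point
  have hq : Q - P ≠ 0 := sub_ne_zero.2 (Ne.symm hPQ)
  set S' := (S.erase P).erase Q with hS'
  have hS'card : 2 ≤ S'.card := by
    rw [hS', Finset.card_erase_of_mem (Finset.mem_erase.2 ⟨Ne.symm hPQ, hQS⟩),
      Finset.card_erase_of_mem hPS]
    omega
  obtain ⟨X₀, hX₀⟩ := Finset.card_pos.1 (show 0 < S'.card by omega)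
  have hX₀S : X₀ ∈ S := Finset.mem_of_mem_erase (Finset.mem_of_mem_erase hX₀)
  have hX₀Q : X₀ ≠ Q := Finset.ne_of_mem_erase hX₀
  have hX₀P : X₀ ≠ P := Finset.ne_of_mem_erase (Finset.mem_of_mem_erase hX₀)
  have hX₀det : det2 (Q - P) (X₀ - P) ≠ 0 :=
    genpos_det2_ne hgp hPS hQS hX₀S hPQ (Ne.symm hX₀P) (Ne.symm hX₀Q)
  set σ : ℝ := if 0 < det2 (Q - P) (X₀ - P) then 1 else -1 with hσ
  have hσne : σ ≠ 0 := by
    rcases ite_eq_or_eq (0 < det2 (Q - P) (X₀ - P)) (1:ℝ) (-1:ℝ) with h | h <;>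
      rw [hσ, h] <;> norm_num
  set L : ℝ × ℝ → ℝ := fun X => σ * det2 (Q - P) (X - P) with hL
  have hLX₀ : 0 < L X₀ := by
    rw [hL]
    simp only [hσ]
    rcases lt_trichotomy (det2 (Q - P) (X₀ - P)) 0 with h | h | h
    · rw [if_neg (by linarith)]; linarith
    · exact absurd h hX₀det
    · rw [if_pos h]; linarith
  set U := S.filter (fun X => 0 < L X) with hU
  obtain ⟨R, hRU, hRmax⟩ := Finset.exists_max_image U L
    ⟨X₀, Finset.mem_filter.2 ⟨hX₀S, hLX₀⟩⟩
  obtain ⟨hRS, hLR⟩ := Finset.mem_filter.1 hRU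
  have hmaxS : ∀ X ∈ S, L X ≤ L R := by
    intro X hX
    by_cases h : 0 < L X
    · exact hRmax X (Finset.mem_filter.2 ⟨hX, h⟩)
    · push_neg at h; linarith
  have hLP : L P = 0 := by rw [hL]; simp [sub_self, det2_zero_right]
  have hLQ : L Q = 0 := by rw [hL]; simp [det2_self_sub]
  have hRP : R ≠ P := fun h => by rw [h, hLP] at hLR; linarith
  have hRQ : R ≠ Q := fun h => by rw [h, hLQ] at hLR; linarith
  -- R is an extreme point
  have hext : R ∉ convexHull ℝ ((S : Set (ℝ × ℝ)) \ {R}) := by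
    intro hmem
    rw [← Finset.coe_erase, Finset.convexHull_eq] at hmem
    obtain ⟨w, hw0, hw1, hcm⟩ := hmem
    rw [Finset.centerMass_eq_of_sum_1 _ _ hw1] at hcm
    set E := S.erase R with hE
    simp only [id] at hcm
    -- linear expansion of L
    obtain ⟨a, b, c, habc⟩ : ∃ a b c : ℝ, ∀ X : ℝ × ℝ, L X = a * X.1 + b * X.2 + c :=
      ⟨-σ * (Q - P).2, σ * (Q - P).1, σ * ((Q - P).2 * P.1 - (Q - P).1 * P.2),
        fun X => by rw [hL]; unfold det2; simp only [Prod.fst_sub, Prod.snd_sub]; ring⟩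
    have key : L R = ∑ y ∈ E, w y * L y := by
      have h1 : R.1 = ∑ y ∈ E, w y * y.1 := by
        rw [← hcm, Prod.fst_sum]
        exact Finset.sum_congr rfl fun y _ => by simp
      have h2 : R.2 = ∑ y ∈ E, w y * y.2 := by
        rw [← hcm, Prod.snd_sum]
        exact Finset.sum_congr rfl fun y _ => by simp
      have h3 : ∑ y ∈ E, w y * L y =
          a * (∑ y ∈ E, w y * y.1) + b * (∑ y ∈ E, w y * y.2) + c * (∑ y ∈ E, w y) := by
        rw [Finset.mul_sum, Finset.mul_sum, Finset.mul_sum, ← Finset.sum_add_distrib,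
          ← Finset.sum_add_distrib]
        exact Finset.sum_congr rfl fun y _ => by rw [habc]; ring
      rw [h3, hw1, habc, h1, h2]
      ring
    by_cases hall : ∀ y ∈ E, w y ≠ 0 → L y = L R
    · -- support has at most one point
      set E' := E.filter (fun y => w y ≠ 0) with hE'
      have hcard : E'.card ≤ 1 := by
        rw [Finset.card_le_one]
        intro y hy y' hy'
        by_contra hne
        obtain ⟨hyE, hwy⟩ := Finset.mem_filter.1 hy
        obtain ⟨hy'E, hwy'⟩ := Finset.mem_filter.1 hy'
        have hyS : y ∈ S := Finset.mem_of_mem_erase hyE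
        have hy'S : y' ∈ S := Finset.mem_of_mem_erase hy'E
        have hyR : y ≠ R := Finset.ne_of_mem_erase hyE
        have hy'R : y' ≠ R := Finset.ne_of_mem_erase hy'E
        have hdy : det2 (Q - P) (y - R) = 0 := by
          have h := hall y hyE hwy
          have : σ * det2 (Q - P) (y - R) = L y - L R := by
            rw [hL]; unfold det2; simp only [Prod.fst_sub, Prod.snd_sub]; ring
          rw [h] at this
          simp at this
          rcases this with h' | h'
          · exact absurd h' hσne
          · exact h'
        have hdy' : det2 (Q - P) (y' - R) = 0 := by
          have h := hall y' hy'E hwy'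
          have : σ * det2 (Q - P) (y' - R) = L y' - L R := by
            rw [hL]; unfold det2; simp only [Prod.fst_sub, Prod.snd_sub]; ring
          rw [h] at this
          simp at this
          rcases this with h' | h'
          · exact absurd h' hσne
          · exact h'
        have : det2 (y - R) (y' - R) = 0 := det2_of_both_parallel hq hdy hdy'
        exact genpos_det2_ne hgp hRS hyS hy'S (Ne.symm hyR) (Ne.symm hy'R) hne this
      have hsum' : ∑ y ∈ E', w y = 1 := by
        rw [hE', Finset.sum_filter_ne_zero, hw1]
      have hne' : E'.Nonempty := by
        by_contra h
        rw [Finset.not_nonempty_iff_eq_empty] at h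
        rw [h, Finset.sum_empty] at hsum'
        norm_num at hsum'
      obtain ⟨y₁, hy₁⟩ := Finset.card_eq_one.1 (le_antisymm hcard hne'.card_pos)
      have hwy₁ : w y₁ = 1 := by
        rw [hy₁, Finset.sum_singleton] at hsum'
        exact hsum'
      have hy₁E : y₁ ∈ E := (Finset.mem_filter.1 (hy₁ ▸ Finset.mem_singleton_self y₁)).1
      have hRy₁ : R = y₁ := by
        have : R = ∑ y ∈ E', w y • y := by
          rw [← hcm]
          apply (Finset.sum_subset (Finset.filter_subset _ _) _).symm
          intro y hyE hyE'
          have : w y = 0 := by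
            by_contra h
            exact hyE' (Finset.mem_filter.2 ⟨hyE, h⟩)
          rw [this, zero_smul]
        rw [this, hy₁, Finset.sum_singleton, hwy₁, one_smul]
      exact (Finset.ne_of_mem_erase hy₁E) hRy₁.symm
    · push_neg at hall
      obtain ⟨y₀, hy₀E, hwy₀, hLy₀⟩ := hall
      have hy₀S : y₀ ∈ S := Finset.mem_of_mem_erase hy₀E
      have hw₀pos : 0 < w y₀ := lt_of_le_of_ne (hw0 y₀ hy₀E) (Ne.symm hwy₀)
      have hLy₀lt : L y₀ < L R := lt_of_le_of_ne (hmaxS y₀ hy₀S) hLy₀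
      have hlt : ∑ y ∈ E, w y * L y < ∑ y ∈ E, w y * L R := by
        apply Finset.sum_lt_sum
        · intro y hy
          exact mul_le_mul_of_nonneg_left (hmaxS y (Finset.mem_of_mem_erase hy)) (hw0 y hy)
        · exact ⟨y₀, hy₀E, mul_lt_mul_of_pos_left hLy₀lt hw₀pos⟩
      rw [← Finset.sum_mul, hw1, one_mul] at hlt
      rw [key] at hlt
      exact lt_irrefl _ hlt
  obtain ⟨vR, hvR⟩ := extreme_direction hRS hext
  have hdegR : hdeg S R = 1 := degree_one S heven h4 hgp R hRS vR hvR
  exact ⟨P, Q, R, hPS, hQS, hRS, hPQ, Ne.symm hRP, Ne.symm hRQ, hdegP, hdegQ, hdegR⟩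
end
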